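/- arXiv:2509.25467 — 4 statements merged into one kernel-verified Lean document; each statement's English description precedes it below -/
import Mathlib

section
/- Fix Q > S > 0. The function M(r) = (e^{Qr} - e^{-Sr})/(e^{Qr} - e^{Sr}) is (strictly) decreasing on (0,∞), and its limit as r → 0⁺ equals (Q+S)/(Q-S). -/
open Real Filter

private lemma exp_cvx' {t z : ℝ} (ht0 : 0 < t) (ht1 : t < 1) (hz : z ≠ 0) :
    Real.exp (t * z) < 1 - t + t * Real.exp z := by
  have h := strictConvexOn_exp.2 (Set.mem_univ z) (Set.mem_univ 0) hz ht0
      (by linarith : (0:ℝ) < 1 - t) (by ring)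
  simp only [smul_eq_mul, mul_zero, add_zero, Real.exp_zero, mul_one] at h
  linarith

private lemma keyK' {x y : ℝ} (hx : 0 < x) (hxy : x < y) :
    (Real.exp x - 1) * y < (Real.exp y - 1) * x := by
  have hy : 0 < y := hx.trans hxy
  have h := exp_cvx' (div_pos hx hy) ((div_lt_one hy).2 hxy) hy.ne'
  rw [div_mul_cancel₀ _ hy.ne'] at h
  have h2 := mul_lt_mul_of_pos_right h hy
  have h3 : (1 - x / y + x / y * Real.exp y) * y = y - x + x * Real.exp y := by
    field_simp
  rw [h3] at h2; nlinarith

private lemma keyF' {x y : ℝ} (hx : 0 < x) (hxy : x < y) :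
    x * (1 - Real.exp (-y)) < y * (1 - Real.exp (-x)) := by
  have hy : 0 < y := hx.trans hxy
  have h := exp_cvx' (div_pos hx hy) ((div_lt_one hy).2 hxy) (neg_ne_zero.2 hy.ne')
  have hxy' : x / y * (-y) = -x := by field_simp
  rw [hxy'] at h
  have h2 := mul_lt_mul_of_pos_right h hy
  have h3 : (1 - x / y + x / y * Real.exp (-y)) * y = y - x + x * Real.exp (-y) := by
    field_simp
  rw [h3] at h2; nlinarith

private lemma Mid' (Q S r : ℝ) (hS : 0 < S) (hQS : S < Q) (hr : 0 < r) :
    (Real.exp (Q * r) - Real.exp (-S * r)) / (Real.exp (Q * r) - Real.exp (S * r)) =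
      1 + (2 * S / (Q - S)) *
        (((1 - Real.exp (-(2 * S * r))) / (2 * S * r)) /
          ((Real.exp ((Q - S) * r) - 1) / ((Q - S) * r))) := by
  have hQ : Real.exp (Q * r) = Real.exp ((Q - S) * r) * Real.exp (S * r) := by
    rw [← Real.exp_add]; ring_nf
  have hmS : Real.exp (-S * r) = (Real.exp (S * r))⁻¹ := by
    rw [← Real.exp_neg]; ring_nf
  have hm2S : Real.exp (-(2 * S * r)) = ((Real.exp (S * r)) * Real.exp (S * r))⁻¹ := by
    rw [← Real.exp_add, ← Real.exp_neg]; ring_nf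
  rw [hQ, hmS, hm2S]
  set u := Real.exp (S * r) with hu
  set v := Real.exp ((Q - S) * r) with hvdef
  have hu0 : 0 < u := Real.exp_pos _
  have hv1 : 1 < v := Real.one_lt_exp_iff.2 (mul_pos (by linarith) hr)
  have hden : v * u - u ≠ 0 := by nlinarith
  have h1 : (2 : ℝ) * S * r ≠ 0 := by positivity
  have h2 : (Q - S) * r ≠ 0 := ne_of_gt (mul_pos (by linarith) hr)
  have h3 : Q - S ≠ 0 := ne_of_gt (by linarith)
  have h4 : v - 1 ≠ 0 := by nlinarith
  field_simp
  ring

private lemma slopeExp' : Filter.Tendsto (fun x : ℝ => (Real.exp x - 1) / x)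
    (nhdsWithin 0 {(0:ℝ)}ᶜ) (nhds 1) := by
  have h := Real.hasDerivAt_exp 0
  rw [hasDerivAt_iff_tendsto_slope] at h
  have : (slope Real.exp 0) = fun x : ℝ => (Real.exp x - 1) / x := by
    funext x
    simp [slope_def_field, Real.exp_zero]
  rw [this, Real.exp_zero] at h
  exact h

/-- For fixed `Q > S > 0`, the function `M(r) = (e^{Qr} - e^{-Sr})/(e^{Qr} - e^{Sr})`
is strictly decreasing on `(0,∞)`, and its limit as `r → 0⁺` is `(Q+S)/(Q-S)`. -/
theorem M_strictAnti_and_tendsto (Q S : ℝ) (hS : 0 < S) (hQS : S < Q) :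
    StrictAntiOn
        (fun r : ℝ => (Real.exp (Q * r) - Real.exp (-S * r)) /
          (Real.exp (Q * r) - Real.exp (S * r))) (Set.Ioi 0) ∧
      Filter.Tendsto
        (fun r : ℝ => (Real.exp (Q * r) - Real.exp (-S * r)) /
          (Real.exp (Q * r) - Real.exp (S * r)))
        (nhdsWithin 0 (Set.Ioi 0)) (nhds ((Q + S) / (Q - S))) := by
  have hQS0 : 0 < Q - S := by linarith
  constructor
  · intro r hr s hs hrs
    simp only [Set.mem_Ioi] at hr hs
    simp only
    rw [Mid' Q S r hS hQS hr, Mid' Q S s hS hQS hs]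
    have h2Sr : 0 < 2 * S * r := by positivity
    have h2Ss : 0 < 2 * S * s := by positivity
    have hQSr : 0 < (Q - S) * r := by positivity
    have hQSs : 0 < (Q - S) * s := by positivity
    -- f decreasing
    have hf : (1 - Real.exp (-(2 * S * s))) / (2 * S * s)
        < (1 - Real.exp (-(2 * S * r))) / (2 * S * r) := by
      rw [div_lt_div_iff₀ h2Ss h2Sr]
      have := keyF' h2Sr (by nlinarith : 2 * S * r < 2 * S * s)
      nlinarith
    -- k increasing
    have hk : (Real.exp ((Q - S) * r) - 1) / ((Q - S) * r)
        < (Real.exp ((Q - S) * s) - 1) / ((Q - S) * s) := by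
      rw [div_lt_div_iff₀ hQSr hQSs]
      have := keyK' hQSr (by nlinarith : (Q - S) * r < (Q - S) * s)
      nlinarith
    have hfpos : 0 < 1 - Real.exp (-(2 * S * s)) := by
      have : Real.exp (-(2 * S * s)) < 1 := Real.exp_lt_one_iff.2 (by linarith)
      linarith
    have hkpos : 0 < (Real.exp ((Q - S) * r) - 1) / ((Q - S) * r) := by
      have : 1 < Real.exp ((Q - S) * r) := Real.one_lt_exp_iff.2 hQSr
      exact div_pos (by linarith) hQSr
    have hfpos' : 0 < (1 - Real.exp (-(2 * S * s))) / (2 * S * s) := div_pos hfpos h2Ss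
    have hfposr : 0 < (1 - Real.exp (-(2 * S * r))) / (2 * S * r) := by
      have : Real.exp (-(2 * S * r)) < 1 := Real.exp_lt_one_iff.2 (by linarith)
      exact div_pos (by linarith) h2Sr
    have hc : 0 < 2 * S / (Q - S) := by positivity
    gcongr
  · have t2 : Filter.Tendsto (fun r : ℝ => (Q - S) * r) (nhdsWithin 0 (Set.Ioi 0))
        (nhdsWithin 0 {(0:ℝ)}ᶜ) := by
      rw [tendsto_nhdsWithin_iff]
      constructor
      · have : Filter.Tendsto (fun r : ℝ => (Q - S) * r) (nhds 0) (nhds 0) := by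
          simpa using Continuous.tendsto (f := fun r : ℝ => (Q - S) * r) (continuous_const.mul continuous_id) (0 : ℝ)
        exact this.mono_left nhdsWithin_le_nhds
      · filter_upwards [self_mem_nhdsWithin] with r hr
        exact ne_of_gt (mul_pos hQS0 hr)
    have t1 : Filter.Tendsto (fun r : ℝ => -(2 * S * r)) (nhdsWithin 0 (Set.Ioi 0))
        (nhdsWithin 0 {(0:ℝ)}ᶜ) := by
      rw [tendsto_nhdsWithin_iff]
      constructor
      · have : Filter.Tendsto (fun r : ℝ => -(2 * S * r)) (nhds 0) (nhds 0) := by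
          simpa using Continuous.tendsto (f := fun r : ℝ => -(2 * S * r)) ((continuous_const.mul continuous_id).neg) (0 : ℝ)
        exact this.mono_left nhdsWithin_le_nhds
      · filter_upwards [self_mem_nhdsWithin] with r hr
        have : 0 < 2 * S * r := mul_pos (by positivity : (0:ℝ) < 2 * S) hr
        exact ne_of_lt (by linarith : -(2 * S * r) < 0)
    have ht2 := slopeExp'.comp t2
    have ht1' := slopeExp'.comp t1
    have ht1 : Filter.Tendsto (fun r : ℝ => (1 - Real.exp (-(2 * S * r))) / (2 * S * r))
        (nhdsWithin 0 (Set.Ioi 0)) (nhds 1) := by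
      refine ht1'.congr fun r => ?_
      show (Real.exp (-(2 * S * r)) - 1) / (-(2 * S * r)) = _
      rw [div_neg, ← neg_div]
      ring_nf
    have hfin : Filter.Tendsto
        (fun r : ℝ => 1 + (2 * S / (Q - S)) *
          (((1 - Real.exp (-(2 * S * r))) / (2 * S * r)) /
            ((Real.exp ((Q - S) * r) - 1) / ((Q - S) * r))))
        (nhdsWithin 0 (Set.Ioi 0)) (nhds (1 + (2 * S / (Q - S)) * (1 / 1))) :=
      tendsto_const_nhds.add (((ht1.div ht2 one_ne_zero)).const_mul _)
    have hval : (1 : ℝ) + (2 * S / (Q - S)) * (1 / 1) = (Q + S) / (Q - S) := by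
      field_simp
      ring
    rw [hval] at hfin
    refine hfin.congr' ?_
    filter_upwards [self_mem_nhdsWithin] with r hr
    exact (Mid' Q S r hS hQS hr).symm
end

section
/- Let X be a compact metric space, m a Borel probability measure on X, and f, g continuous nonnegative not-identically-zero functions with ∫ f dm = ∫ g dm = 1. If the Hilbert projective distance Θ₊(f,g) (for the cone of nonnegative functions) is finite, then ‖f - g‖_∞ ≤ (e^{Θ₊(f,g)} - 1) · min(‖f‖_∞, ‖g‖_∞). -/
open scoped ENNReal
open MeasureTheory

/-- Extended logarithm `ℝ≥0∞ → EReal`, with `elog 0 = ⊥` and `elog ∞ = ⊤`. -/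
noncomputable def elog (x : ℝ≥0∞) : EReal :=
  if x = 0 then ⊥ else if x = ⊤ then ⊤ else ((Real.log x.toReal : ℝ) : EReal)

/-- The Hilbert projective (pseudo-)metric of a cone `Λ`. -/
noncomputable def hilbertTheta {E : Type*} [AddCommGroup E] [Module ℝ E]
    (Λ : Set E) (f g : E) : EReal :=
  elog
    ((sInf (ENNReal.ofReal '' {t : ℝ | 0 < t ∧ (t • f - g ∈ Λ ∨ t • f - g = 0)})) /
     (sSup (ENNReal.ofReal '' {t : ℝ | 0 < t ∧ (g - t • f ∈ Λ ∨ g - t • f = 0)})))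

set_option maxHeartbeats 1000000 in
/-- If `f, g` are nonnegative, not identically zero continuous functions on a compact
metric space with `∫ f dm = ∫ g dm = 1` for a Borel probability measure `m`, and the
Hilbert projective distance `Θ₊(f,g)` (for the cone of nonnegative functions) is finite,
then `‖f - g‖∞ ≤ (e^{Θ₊(f,g)} - 1) · min (‖f‖∞, ‖g‖∞)`. -/
theorem norm_sub_le_of_hilbertTheta {X : Type*} [MetricSpace X] [CompactSpace X]
    [MeasurableSpace X] [BorelSpace X]
    (m : Measure X) [IsProbabilityMeasure m]
    (f g : C(X, ℝ)) (hf0 : ∀ x, 0 ≤ f x) (hfne : f ≠ 0)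
    (hg0 : ∀ x, 0 ≤ g x) (hgne : g ≠ 0)
    (hfm : ∫ x, f x ∂m = 1) (hgm : ∫ x, g x ∂m = 1)
    (hfin_top : hilbertTheta {u : C(X, ℝ) | (∀ x, 0 ≤ u x) ∧ u ≠ 0} f g ≠ ⊤)
    (hfin_bot : hilbertTheta {u : C(X, ℝ) | (∀ x, 0 ≤ u x) ∧ u ≠ 0} f g ≠ ⊥) :
    ‖f - g‖ ≤
      (Real.exp (hilbertTheta {u : C(X, ℝ) | (∀ x, 0 ≤ u x) ∧ u ≠ 0} f g).toReal - 1) *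
        min ‖f‖ ‖g‖ := by
  have hfi : Integrable (fun x => f x) m :=
    f.continuous.integrable_of_hasCompactSupport (HasCompactSupport.of_compactSpace _)
  have hgi : Integrable (fun x => g x) m :=
    g.continuous.integrable_of_hasCompactSupport (HasCompactSupport.of_compactSpace _)
  -- characterize the two sets
  have hSB : {t : ℝ | 0 < t ∧ (t • f - g ∈ {u : C(X, ℝ) | (∀ x, 0 ≤ u x) ∧ u ≠ 0}
      ∨ t • f - g = 0)} = {t : ℝ | 0 < t ∧ ∀ x, g x ≤ t * f x} := by
    ext t
    simp only [Set.mem_setOf_eq]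
    constructor
    · rintro ⟨ht, h | h⟩
      · refine ⟨ht, fun x => ?_⟩
        have := h.1 x
        simp only [ContinuousMap.sub_apply, ContinuousMap.smul_apply, smul_eq_mul] at this
        linarith
      · refine ⟨ht, fun x => ?_⟩
        have := ContinuousMap.congr_fun h x
        simp only [ContinuousMap.sub_apply, ContinuousMap.smul_apply, smul_eq_mul,
          ContinuousMap.zero_apply] at this
        linarith
    · rintro ⟨ht, hall⟩
      refine ⟨ht, ?_⟩
      by_cases h0 : t • f - g = 0
      · exact Or.inr h0
      · exact Or.inl ⟨fun x => by
          simp only [ContinuousMap.sub_apply, ContinuousMap.smul_apply, smul_eq_mul]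
          linarith [hall x], h0⟩
  have hSA : {t : ℝ | 0 < t ∧ (g - t • f ∈ {u : C(X, ℝ) | (∀ x, 0 ≤ u x) ∧ u ≠ 0}
      ∨ g - t • f = 0)} = {t : ℝ | 0 < t ∧ ∀ x, t * f x ≤ g x} := by
    ext t
    simp only [Set.mem_setOf_eq]
    constructor
    · rintro ⟨ht, h | h⟩
      · refine ⟨ht, fun x => ?_⟩
        have := h.1 x
        simp only [ContinuousMap.sub_apply, ContinuousMap.smul_apply, smul_eq_mul] at this
        linarith
      · refine ⟨ht, fun x => ?_⟩
        have := ContinuousMap.congr_fun h x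
        simp only [ContinuousMap.sub_apply, ContinuousMap.smul_apply, smul_eq_mul,
          ContinuousMap.zero_apply] at this
        linarith
    · rintro ⟨ht, hall⟩
      refine ⟨ht, ?_⟩
      by_cases h0 : g - t • f = 0
      · exact Or.inr h0
      · exact Or.inl ⟨fun x => by
          simp only [ContinuousMap.sub_apply, ContinuousMap.smul_apply, smul_eq_mul]
          linarith [hall x], h0⟩
  simp only [hilbertTheta, hSB, hSA] at hfin_top hfin_bot ⊢
  set B := sInf (ENNReal.ofReal '' {t : ℝ | 0 < t ∧ ∀ x, g x ≤ t * f x}) with hBdef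
  set A := sSup (ENNReal.ofReal '' {t : ℝ | 0 < t ∧ ∀ x, t * f x ≤ g x}) with hAdef
  -- elements of SB are ≥ 1, of SA are ≤ 1
  have hB_lb : ∀ t : ℝ, (0 < t ∧ ∀ x, g x ≤ t * f x) → 1 ≤ t := by
    rintro t ⟨ht, hle⟩
    have : (∫ x, g x ∂m) ≤ ∫ x, t * f x ∂m :=
      integral_mono hgi (hfi.const_mul t) hle
    rw [integral_const_mul, hfm, hgm, mul_one] at this
    exact this
  have hA_ub : ∀ t : ℝ, (0 < t ∧ ∀ x, t * f x ≤ g x) → t ≤ 1 := by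
    rintro t ⟨ht, hle⟩
    have : (∫ x, t * f x ∂m) ≤ ∫ x, g x ∂m :=
      integral_mono (hfi.const_mul t) hgi hle
    rw [integral_const_mul, hfm, hgm, mul_one] at this
    exact this
  have h1B : 1 ≤ B := by
    refine le_sInf ?_
    rintro x ⟨t, ht, rfl⟩
    rw [← ENNReal.ofReal_one]
    exact ENNReal.ofReal_le_ofReal (hB_lb t ht)
  have hA1 : A ≤ 1 := by
    refine sSup_le ?_
    rintro x ⟨t, ht, rfl⟩
    rw [← ENNReal.ofReal_one]
    exact ENNReal.ofReal_le_ofReal (hA_ub t ht)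
  have hB0 : B ≠ 0 := by
    intro h; rw [h] at h1B; simp at h1B
  have hAtop : A ≠ ⊤ := ne_top_of_le_ne_top ENNReal.one_ne_top hA1
  have hz_top : B / A ≠ ⊤ := by
    intro h; apply hfin_top; rw [h]; simp [elog]
  have hz_bot : B / A ≠ 0 := by
    intro h; apply hfin_bot; rw [h]; simp [elog]
  have hA0 : A ≠ 0 := fun h => hz_top (ENNReal.div_eq_top.2 (Or.inl ⟨hB0, h⟩))
  have hBtop : B ≠ ⊤ := fun h => hz_top (ENNReal.div_eq_top.2 (Or.inr ⟨h, hAtop⟩))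
  set a := A.toReal with hadef
  set b := B.toReal with hbdef
  have ha0 : 0 < a := ENNReal.toReal_pos hA0 hAtop
  have ha1 : a ≤ 1 := by
    have := ENNReal.toReal_mono ENNReal.one_ne_top hA1
    simpa using this
  have hb1 : 1 ≤ b := by
    have := ENNReal.toReal_mono hBtop h1B
    simpa using this
  -- SB nonempty
  obtain ⟨t0, ht0⟩ : ∃ t : ℝ, 0 < t ∧ ∀ x, g x ≤ t * f x := by
    by_contra h
    push_neg at h
    apply hBtop
    rw [hBdef]
    have hemp : {t : ℝ | 0 < t ∧ ∀ x, g x ≤ t * f x} = ∅ := by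
      rw [Set.eq_empty_iff_forall_notMem]
      rintro t ⟨ht, hall⟩
      obtain ⟨x, hx⟩ := h t ht
      exact absurd (hall x) (not_le.2 hx)
    rw [hemp, Set.image_empty, sInf_empty]
  -- pointwise bounds
  have hBpt : ∀ x, g x ≤ b * f x := by
    intro x
    by_contra hlt
    push_neg at hlt
    have hfx : 0 < f x := by
      rcases lt_or_eq_of_le (hf0 x) with h | h
      · exact h
      · exfalso
        have h1 := ht0.2 x
        rw [← h] at h1
        simp at h1
        nlinarith [hg0 x, hlt]
    have hgf : b < g x / f x := (lt_div_iff₀ hfx).2 hlt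
    have hle : B ≤ ENNReal.ofReal b := by rw [hbdef, ENNReal.ofReal_toReal hBtop]
    have hge : ENNReal.ofReal (g x / f x) ≤ B := by
      refine le_sInf ?_
      rintro y ⟨t, ⟨ht, hall⟩, rfl⟩
      exact ENNReal.ofReal_le_ofReal ((div_le_iff₀ hfx).2 (hall x))
    have : ENNReal.ofReal b < ENNReal.ofReal (g x / f x) :=
      (ENNReal.ofReal_lt_ofReal_iff (by linarith)).2 hgf
    exact absurd (lt_of_lt_of_le this (hge.trans hle)) (lt_irrefl _)
  have hApt : ∀ x, a * f x ≤ g x := by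
    intro x
    by_contra hlt
    push_neg at hlt
    have hfx : 0 < f x := by
      rcases lt_or_eq_of_le (hf0 x) with h | h
      · exact h
      · exfalso
        rw [← h] at hlt
        nlinarith [hg0 x]
    have hgf : g x / f x < a := (div_lt_iff₀ hfx).2 hlt
    have hge : ENNReal.ofReal a ≤ A := by rw [hadef, ENNReal.ofReal_toReal hAtop]
    have hle : A ≤ ENNReal.ofReal (g x / f x) := by
      refine sSup_le ?_
      rintro y ⟨t, ⟨ht, hall⟩, rfl⟩
      exact ENNReal.ofReal_le_ofReal ((le_div_iff₀ hfx).2 (hall x))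
    have : ENNReal.ofReal (g x / f x) < ENNReal.ofReal a :=
      (ENNReal.ofReal_lt_ofReal_iff ha0).2 hgf
    exact absurd (lt_of_lt_of_le this (hge.trans hle)) (lt_irrefl _)
  -- compute exp Θ
  have hexp : Real.exp (elog (B / A)).toReal = b / a := by
    rw [elog, if_neg hz_bot, if_neg hz_top]
    rw [EReal.toReal_coe, ENNReal.toReal_div, ← hadef, ← hbdef]
    exact Real.exp_log (by positivity)
  rw [hexp]
  set c := b / a with hcdef
  have hac : a * c = b := by rw [hcdef]; field_simp
  have hc1 : 1 ≤ c := by rw [hcdef]; rw [le_div_iff₀ ha0]; linarith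
  have hfnorm : ∀ x, f x ≤ ‖f‖ := fun x => by
    have := f.norm_coe_le_norm x
    rw [Real.norm_eq_abs, abs_of_nonneg (hf0 x)] at this
    exact this
  have hgnorm : ∀ x, g x ≤ ‖g‖ := fun x => by
    have := g.norm_coe_le_norm x
    rw [Real.norm_eq_abs, abs_of_nonneg (hg0 x)] at this
    exact this
  have hfn0 : (0:ℝ) ≤ ‖f‖ := norm_nonneg _
  have hgn0 : (0:ℝ) ≤ ‖g‖ := norm_nonneg _
  have hC : 0 ≤ (c - 1) * min ‖f‖ ‖g‖ :=
    mul_nonneg (by linarith) (le_min hfn0 hgn0)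
  rw [ContinuousMap.norm_le _ hC]
  intro x
  have h1 := hApt x; have h2 := hBpt x
  have h3 := hf0 x; have h4 := hg0 x
  have h5 := hfnorm x; have h6 := hgnorm x
  have key1 : |f x - g x| ≤ (c - 1) * ‖f‖ := by
    rw [abs_sub_le_iff]
    constructor
    · nlinarith [sq_nonneg (1 - a), mul_nonneg (sub_nonneg.2 h5) (by linarith : (0:ℝ) ≤ 1 - a)]
    · nlinarith [mul_nonneg (sub_nonneg.2 h5) (by linarith : (0:ℝ) ≤ b - 1),
        mul_nonneg (by linarith : (0:ℝ) ≤ c) (by linarith : (0:ℝ) ≤ 1 - a)]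
  have key2 : |f x - g x| ≤ (c - 1) * ‖g‖ := by
    rw [abs_sub_le_iff]
    constructor
    · -- a*(f x - g x) ≤ (1-a) g x ≤ (b - a)‖g‖ = a(c-1)‖g‖
      have h7 : a * (f x - g x) ≤ (1 - a) * g x := by nlinarith
      have h8 : (1 - a) * g x ≤ (b - a) * ‖g‖ := by nlinarith
      nlinarith
    · -- b*(g x - f x) ≤ (b-1) g x ≤ (b-1)‖g‖ ≤ (bc - b)‖g‖
      have h7 : b * (g x - f x) ≤ (b - 1) * g x := by nlinarith
      have h8 : (b - 1) * g x ≤ (b - 1) * ‖g‖ := by nlinarith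
      have h9 : b * c ≥ b * b := by nlinarith
      nlinarith [sq_nonneg (b - 1)]
  rw [ContinuousMap.sub_apply, Real.norm_eq_abs]
  rcases min_cases ‖f‖ ‖g‖ with ⟨hm, _⟩ | ⟨hm, _⟩ <;> rw [hm]
  · exact key1
  · exact key2
end

section
/- Let X be a compact metric space, m a Borel probability measure on X, and Z a set of continuous nonnegative functions f with ∫ f dm = 1. Suppose R, S > 0 satisfy: Θ₊(f,g) ≤ R for all f,g ∈ Z, and Θ₊(f, 1) ≤ S for all f ∈ Z (where Θ₊ is the Hilbert projective metric of the cone of nonnegative continuous functions). Then for all f, g ∈ Z, ‖g - f‖_∞ ≤ R⁻¹(e^R - 1) e^S · Θ₊(f,g). -/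
open scoped ENNReal
open MeasureTheory

private lemma mem_cone_iff' {X : Type*} [TopologicalSpace X] (u : C(X, ℝ)) :
    (u ∈ {u : C(X, ℝ) | (∀ x, 0 ≤ u x) ∧ u ≠ 0} ∨ u = 0) ↔ ∀ x, 0 ≤ u x := by
  constructor
  · rintro (⟨h, -⟩ | rfl) x
    · exact h x
    · simp
  · intro h
    by_cases hu : u = 0
    · exact Or.inr hu
    · exact Or.inl ⟨h, hu⟩

private lemma key_lemma {X : Type*} [MetricSpace X] [CompactSpace X]
    [MeasurableSpace X] [BorelSpace X]
    (m : Measure X) [IsProbabilityMeasure m]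
    (f g : C(X, ℝ)) (hf0 : ∀ x, 0 ≤ f x) (hg0 : ∀ x, 0 ≤ g x)
    (hfm : ∫ x, f x ∂m = 1) (hgm : ∫ x, g x ∂m = 1) (C : ℝ)
    (hC : hilbertTheta {u : C(X, ℝ) | (∀ x, 0 ≤ u x) ∧ u ≠ 0} f g ≤ (C : EReal)) :
    ∃ a b : ℝ, 0 < a ∧ a ≤ 1 ∧ 1 ≤ b ∧ (∀ x, a * f x ≤ g x) ∧ (∀ x, g x ≤ b * f x) ∧
      hilbertTheta {u : C(X, ℝ) | (∀ x, 0 ≤ u x) ∧ u ≠ 0} f g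
        = ((Real.log (b / a) : ℝ) : EReal) := by
  set U : Set ℝ := {t : ℝ | 0 < t ∧ ∀ x, g x ≤ t * f x} with hU
  set L : Set ℝ := {t : ℝ | 0 < t ∧ ∀ x, t * f x ≤ g x} with hL
  have hUeq : {t : ℝ | 0 < t ∧
      (t • f - g ∈ {u : C(X, ℝ) | (∀ x, 0 ≤ u x) ∧ u ≠ 0} ∨ t • f - g = 0)} = U := by
    ext t
    simp only [hU, Set.mem_setOf_eq, mem_cone_iff', ContinuousMap.sub_apply,
      ContinuousMap.smul_apply, smul_eq_mul, sub_nonneg]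
    refine and_congr_right fun ht => ⟨?_, ?_⟩
    · rintro (⟨h, -⟩ | h0)
      · exact h
      · intro x
        have h2 := ContinuousMap.congr_fun h0 x
        simp at h2
        linarith
    · intro h
      by_cases h0 : t • f - g = 0
      · exact Or.inr h0
      · exact Or.inl ⟨h, h0⟩
  have hLeq : {t : ℝ | 0 < t ∧
      (g - t • f ∈ {u : C(X, ℝ) | (∀ x, 0 ≤ u x) ∧ u ≠ 0} ∨ g - t • f = 0)} = L := by
    ext t
    simp only [hL, Set.mem_setOf_eq, mem_cone_iff', ContinuousMap.sub_apply,
      ContinuousMap.smul_apply, smul_eq_mul, sub_nonneg]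
    refine and_congr_right fun ht => ⟨?_, ?_⟩
    · rintro (⟨h, -⟩ | h0)
      · exact h
      · intro x
        have h2 := ContinuousMap.congr_fun h0 x
        simp at h2
        linarith
    · intro h
      by_cases h0 : g - t • f = 0
      · exact Or.inr h0
      · exact Or.inl ⟨h, h0⟩
  have hTheta : hilbertTheta {u : C(X, ℝ) | (∀ x, 0 ≤ u x) ∧ u ≠ 0} f g =
      elog (sInf (ENNReal.ofReal '' U) / sSup (ENNReal.ofReal '' L)) := by
    rw [hilbertTheta, hUeq, hLeq]
  obtain ⟨x₀, hx₀⟩ : ∃ x, 0 < g x := by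
    by_contra h
    push_neg at h
    have hz : ∀ x, g x = 0 := fun x => le_antisymm (h x) (hg0 x)
    have h0 : ∫ x, g x ∂m = ∫ _x, (0 : ℝ) ∂m :=
      integral_congr_ae (Filter.Eventually.of_forall fun x => hz x)
    rw [hgm] at h0
    simp at h0
  obtain ⟨x₁, hx₁⟩ : ∃ x, 0 < f x := by
    by_contra h
    push_neg at h
    have hz : ∀ x, f x = 0 := fun x => le_antisymm (h x) (hf0 x)
    have h0 : ∫ x, f x ∂m = ∫ _x, (0 : ℝ) ∂m :=
      integral_congr_ae (Filter.Eventually.of_forall fun x => hz x)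
    rw [hfm] at h0
    simp at h0
  have hfM : ∀ x, f x ≤ ‖f‖ := fun x =>
    (le_abs_self _).trans (by simpa [Real.norm_eq_abs] using f.norm_coe_le_norm x)
  have hM : 0 < ‖f‖ := lt_of_lt_of_le hx₁ (hfM x₁)
  have hUlb : ∀ t ∈ U, g x₀ / ‖f‖ ≤ t := by
    rintro t ⟨ht, htf⟩
    rw [div_le_iff₀ hM]
    calc g x₀ ≤ t * f x₀ := htf x₀
    _ ≤ t * ‖f‖ := by nlinarith [hfM x₀]
  have hc₀ : 0 < g x₀ / ‖f‖ := div_pos hx₀ hM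
  have hLub : ∀ t ∈ L, t ≤ g x₁ / f x₁ := by
    rintro t ⟨ht, htf⟩
    rw [le_div_iff₀ hx₁]
    exact htf x₁
  have hDub : sSup (ENNReal.ofReal '' L) ≤ ENNReal.ofReal (g x₁ / f x₁) := by
    refine sSup_le ?_
    rintro y ⟨t, ht, rfl⟩
    exact ENNReal.ofReal_le_ofReal (hLub t ht)
  have hDne : sSup (ENNReal.ofReal '' L) ≠ ⊤ :=
    (lt_of_le_of_lt hDub ENNReal.ofReal_lt_top).ne
  have hNlb : ENNReal.ofReal (g x₀ / ‖f‖) ≤ sInf (ENNReal.ofReal '' U) := by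
    refine le_sInf ?_
    rintro y ⟨t, ht, rfl⟩
    exact ENNReal.ofReal_le_ofReal (hUlb t ht)
  have hNne0 : sInf (ENNReal.ofReal '' U) ≠ 0 :=
    ne_of_gt (lt_of_lt_of_le (ENNReal.ofReal_pos.mpr hc₀) hNlb)
  have hUne : U.Nonempty := by
    by_contra h
    rw [Set.not_nonempty_iff_eq_empty] at h
    rw [hTheta, h] at hC
    simp only [Set.image_empty, sInf_empty] at hC
    rw [ENNReal.top_div, if_neg hDne] at hC
    simp [elog] at hC
  have hLne : L.Nonempty := by
    by_contra h
    rw [Set.not_nonempty_iff_eq_empty] at h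
    rw [hTheta, h] at hC
    simp only [Set.image_empty, sSup_empty, ENNReal.bot_eq_zero] at hC
    rw [ENNReal.div_zero hNne0] at hC
    simp [elog] at hC
  have hUbdd : BddBelow U := ⟨g x₀ / ‖f‖, fun t ht => hUlb t ht⟩
  have hLbdd : BddAbove L := ⟨g x₁ / f x₁, fun t ht => hLub t ht⟩
  set b := sInf U with hbdef
  set a := sSup L with hadef
  have hbpos : 0 < b := lt_of_lt_of_le hc₀ (le_csInf hUne hUlb)
  obtain ⟨t₀, ht₀⟩ := hLne
  have hapos : 0 < a := lt_of_lt_of_le ht₀.1 (le_csSup hLbdd ht₀)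
  have hb : ∀ x, g x ≤ b * f x := by
    intro x
    rcases eq_or_lt_of_le (hf0 x) with hfx | hfx
    · obtain ⟨t, ht⟩ := hUne
      have h2 := ht.2 x
      rw [← hfx] at h2 ⊢
      simpa using h2
    · have h2 : g x / f x ≤ b := le_csInf hUne (fun t ht => (div_le_iff₀ hfx).2 (ht.2 x))
      calc g x = (g x / f x) * f x := by field_simp
      _ ≤ b * f x := by nlinarith
  have ha : ∀ x, a * f x ≤ g x := by
    intro x
    rcases eq_or_lt_of_le (hf0 x) with hfx | hfx
    · rw [← hfx]
      simpa using hg0 x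
    · have h2 : a ≤ g x / f x :=
        csSup_le ⟨t₀, ht₀⟩ (fun t ht => (le_div_iff₀ hfx).2 (ht.2 x))
      calc a * f x ≤ (g x / f x) * f x := by nlinarith
      _ = g x := by field_simp
  have hint : ∀ (u : C(X, ℝ)), Integrable (fun x => u x) m := fun u =>
    u.continuous.integrable_of_hasCompactSupport (HasCompactSupport.of_compactSpace _)
  have ha1 : a ≤ 1 := by
    have h1 : ∫ x, a * f x ∂m ≤ ∫ x, g x ∂m :=
      integral_mono ((hint f).const_mul a) (hint g) ha
    rwa [integral_const_mul, hfm, mul_one, hgm] at h1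
  have hb1 : 1 ≤ b := by
    have h1 : ∫ x, g x ∂m ≤ ∫ x, b * f x ∂m :=
      integral_mono (hint g) ((hint f).const_mul b) hb
    rwa [integral_const_mul, hfm, mul_one, hgm] at h1
  have hNval : sInf (ENNReal.ofReal '' U) = ENNReal.ofReal b :=
    (Monotone.map_csInf_of_continuousAt ENNReal.continuous_ofReal.continuousAt
      (fun x y h => ENNReal.ofReal_le_ofReal h) hUne hUbdd).symm
  have hDval : sSup (ENNReal.ofReal '' L) = ENNReal.ofReal a :=
    (Monotone.map_csSup_of_continuousAt ENNReal.continuous_ofReal.continuousAt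
      (fun x y h => ENNReal.ofReal_le_ofReal h) ⟨t₀, ht₀⟩ hLbdd).symm
  have hba : 0 < b / a := div_pos hbpos hapos
  have h1 : ENNReal.ofReal (b / a) ≠ 0 := by
    rw [Ne, ENNReal.ofReal_eq_zero, not_le]
    exact hba
  have hfinal : hilbertTheta {u : C(X, ℝ) | (∀ x, 0 ≤ u x) ∧ u ≠ 0} f g
      = ((Real.log (b / a) : ℝ) : EReal) := by
    rw [hTheta, hNval, hDval, ← ENNReal.ofReal_div_of_pos hapos, elog,
      if_neg h1, if_neg ENNReal.ofReal_ne_top, ENNReal.toReal_ofReal hba.le]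
  exact ⟨a, b, hapos, ha1, hb1, ha, hb, hfinal⟩

/-- Let `Z` be a set of nonnegative continuous functions of integral `1` with respect to
a Borel probability measure `m` on a compact metric space. If `R, S > 0` are such that
`Θ₊(f,g) ≤ R` for all `f, g ∈ Z` and `Θ₊(f, 1) ≤ S` for all `f ∈ Z` (Hilbert metric of
the nonnegative cone), then `‖g - f‖∞ ≤ R⁻¹ (e^R - 1) e^S Θ₊(f,g)` for all `f, g ∈ Z`. -/
theorem norm_sub_le_mul_hilbertTheta {X : Type*} [MetricSpace X] [CompactSpace X]
    [MeasurableSpace X] [BorelSpace X]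
    (m : Measure X) [IsProbabilityMeasure m]
    (Z : Set C(X, ℝ))
    (hZ0 : ∀ f ∈ Z, ∀ x, 0 ≤ f x)
    (hZm : ∀ f ∈ Z, ∫ x, f x ∂m = 1)
    (R S : ℝ) (hR : 0 < R) (hS : 0 < S)
    (hdiam : ∀ f ∈ Z, ∀ g ∈ Z,
      hilbertTheta {u : C(X, ℝ) | (∀ x, 0 ≤ u x) ∧ u ≠ 0} f g ≤ (R : EReal))
    (hone : ∀ f ∈ Z,
      hilbertTheta {u : C(X, ℝ) | (∀ x, 0 ≤ u x) ∧ u ≠ 0} f (1 : C(X, ℝ)) ≤ (S : EReal)) :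
    ∀ f ∈ Z, ∀ g ∈ Z,
      ‖g - f‖ ≤ R⁻¹ * (Real.exp R - 1) * Real.exp S *
        (hilbertTheta {u : C(X, ℝ) | (∀ x, 0 ≤ u x) ∧ u ≠ 0} f g).toReal := by
  intro f hf g hg
  obtain ⟨a, b, hapos, ha1, hb1, ha, hb, hfval⟩ :=
    key_lemma m f g (hZ0 f hf) (hZ0 g hg) (hZm f hf) (hZm g hg) R (hdiam f hf g hg)
  obtain ⟨a₁, b₁, ha₁pos, ha₁1, hb₁1, ha₁, hb₁, h1val⟩ :=
    key_lemma m f 1 (hZ0 f hf) (fun x => by simp) (hZm f hf) (by simp) S (hone f hf)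
  have hbpos : 0 < b := lt_of_lt_of_le one_pos hb1
  have hθR : Real.log (b / a) ≤ R := by
    have h := hdiam f hf g hg
    rw [hfval] at h
    exact_mod_cast h
  have hθ0 : 0 ≤ Real.log (b / a) :=
    Real.log_nonneg (by rw [le_div_iff₀ hapos]; linarith)
  have hθS : Real.log (b₁ / a₁) ≤ S := by
    have h := hone f hf
    rw [h1val] at h
    exact_mod_cast h
  have hfS : ∀ x, f x ≤ Real.exp S := by
    intro x
    have h1 : a₁ * f x ≤ 1 := by simpa using ha₁ x
    have hb₁pos : 0 < b₁ := lt_of_lt_of_le one_pos hb₁1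
    calc f x ≤ 1 / a₁ := (le_div_iff₀ ha₁pos).2 (by linarith)
    _ ≤ b₁ / a₁ := by gcongr
    _ = Real.exp (Real.log (b₁ / a₁)) := (Real.exp_log (div_pos hb₁pos ha₁pos)).symm
    _ ≤ Real.exp S := Real.exp_le_exp.2 hθS
  have hbaS : (0:ℝ) ≤ b - a := by linarith
  have hnorm : ‖g - f‖ ≤ (b - a) * Real.exp S := by
    rw [ContinuousMap.norm_le _ (mul_nonneg hbaS (Real.exp_pos S).le)]
    intro x
    rw [ContinuousMap.sub_apply, Real.norm_eq_abs, abs_le]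
    constructor
    · nlinarith [ha x, hZ0 f hf x, mul_le_mul_of_nonneg_left (hfS x) hbaS]
    · nlinarith [hb x, hZ0 f hf x, mul_le_mul_of_nonneg_left (hfS x) hbaS]
  have hba2 : b - a ≤ b / a - 1 := by
    rw [div_sub_one (ne_of_gt hapos), le_div_iff₀ hapos]
    nlinarith
  have hconv : Real.exp (Real.log (b / a)) - 1
      ≤ R⁻¹ * (Real.exp R - 1) * Real.log (b / a) := by
    set θ := Real.log (b / a) with hθdef
    have hlam0 : 0 ≤ θ / R := div_nonneg hθ0 hR.le
    have hlam1 : 0 ≤ 1 - θ / R := by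
      have h2 : θ / R ≤ 1 := (div_le_one hR).2 hθR
      linarith
    have hcx := convexOn_exp.2 (Set.mem_univ (0 : ℝ)) (Set.mem_univ R) hlam1 hlam0
      (by ring)
    simp only [smul_eq_mul, mul_zero, zero_add, Real.exp_zero, mul_one] at hcx
    rw [div_mul_cancel₀ θ (ne_of_gt hR)] at hcx
    calc Real.exp θ - 1 ≤ (1 - θ / R + θ / R * Real.exp R) - 1 := by linarith
    _ = R⁻¹ * (Real.exp R - 1) * θ := by field_simp; ring
  rw [hfval, EReal.toReal_coe]
  have hq : Real.exp (Real.log (b / a)) = b / a := Real.exp_log (div_pos hbpos hapos)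
  calc ‖g - f‖ ≤ (b - a) * Real.exp S := hnorm
  _ ≤ (R⁻¹ * (Real.exp R - 1) * Real.log (b / a)) * Real.exp S := by
      have h3 : b - a ≤ R⁻¹ * (Real.exp R - 1) * Real.log (b / a) := by
        rw [hq] at hconv; linarith
      exact mul_le_mul_of_nonneg_right h3 (Real.exp_pos S).le
  _ = R⁻¹ * (Real.exp R - 1) * Real.exp S * Real.log (b / a) := by ring
end

section
/- Fix a compact metric space X, δ > 0, β > 0, and Q > S > 0, R > 0. Let Λ(Q) = {f ∈ C(X) : f ≥ 0, f ≢ 0, and f(x) ≤ e^{Q d(x,y)^β} f(y) whenever d(x,y) ≤ δ}, and let Θ be the Hilbert projective metric of the cone Λ(Q). Then for any f, g ∈ Λ(S) with sup f ≤ R inf f and sup g ≤ R inf g, we have Θ(f,g) ≤ 2 log( ((Q+S)/(Q-S)) · R ). -/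
open scoped ENNReal

/-- The log-Hölder cone `Λ(Q)` at scale `δ`, exponent `β`, in `C(X, ℝ)`. -/
def logHolderCone (X : Type*) [MetricSpace X] (Q δ β : ℝ) : Set C(X, ℝ) :=
  {f : C(X, ℝ) | (∀ x, 0 ≤ f x) ∧ f ≠ 0 ∧
    ∀ x y : X, dist x y ≤ δ → f x ≤ Real.exp (Q * dist x y ^ β) * f y}

lemma elog_le_log {x : ℝ≥0∞} {r : ℝ} (h : x ≤ ENNReal.ofReal r) :
    elog x ≤ ((Real.log r : ℝ) : EReal) := by
  unfold elog
  rcases eq_or_ne x 0 with rfl | hx0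
  · simp
  · have hxt : x ≠ ⊤ := ne_top_of_le_ne_top ENNReal.ofReal_ne_top h
    rw [if_neg hx0, if_neg hxt]
    have hr : 0 < r := by
      by_contra hr
      push_neg at hr
      rw [ENNReal.ofReal_eq_zero.2 hr] at h
      exact hx0 (le_antisymm h zero_le)
    have hxr : x.toReal ≤ r := ENNReal.toReal_le_of_le_ofReal hr.le h
    exact_mod_cast Real.log_le_log (ENNReal.toReal_pos hx0 hxt) hxr

lemma key_ineq (Q S u : ℝ) (hS : 0 < S) (hQS : S < Q) (hu : 0 ≤ u) :
    (Q - S) / (Q + S) * (Real.exp (Q * u) - Real.exp (-(S * u))) ≤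
      Real.exp (Q * u) - Real.exp (S * u) := by
  have hQSpos : 0 < Q + S := by linarith
  have ha : (0:ℝ) ≤ 2 * S / (Q + S) := by positivity
  have hb : (0:ℝ) ≤ (Q - S) / (Q + S) := div_nonneg (by linarith) (by linarith)
  have hab : 2 * S / (Q + S) + (Q - S) / (Q + S) = 1 := by field_simp; ring
  have h := convexOn_exp.2 (Set.mem_univ (Q * u)) (Set.mem_univ (-(S * u))) ha hb hab
  have harg : (2 * S / (Q + S)) • (Q * u) + ((Q - S) / (Q + S)) • (-(S * u)) = S * u := by
    simp only [smul_eq_mul]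
    field_simp
    ring
  rw [harg] at h
  simp only [smul_eq_mul] at h
  have hzero : (2 * S / (Q + S) + (Q - S) / (Q + S) - 1) * Real.exp (Q * u) = 0 := by
    rw [hab]; ring
  nlinarith [h, hzero]

set_option maxHeartbeats 1000000 in
/-- For `Q > S > 0` and `R > 0`, any `f, g ∈ Λ(S)` with `sup f ≤ R inf f` and
`sup g ≤ R inf g` satisfy `Θ(f,g) ≤ 2 log (((Q+S)/(Q-S)) R)`, where `Θ` is the
Hilbert projective metric of the cone `Λ(Q)`. -/
theorem hilbertTheta_le_of_logHolder {X : Type*} [MetricSpace X] [CompactSpace X]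
    (δ β Q S R : ℝ) (hδ : 0 < δ) (hβ : 0 < β) (hS : 0 < S) (hQS : S < Q) (hR : 0 < R)
    (f g : C(X, ℝ)) (hf : f ∈ logHolderCone X S δ β) (hg : g ∈ logHolderCone X S δ β)
    (hfR : ∀ x y : X, f x ≤ R * f y) (hgR : ∀ x y : X, g x ≤ R * g y) :
    hilbertTheta (logHolderCone X Q δ β) f g ≤
      ((2 * Real.log ((Q + S) / (Q - S) * R) : ℝ) : EReal) := by
  obtain ⟨hf0, hfne, hfH⟩ := hf
  obtain ⟨hg0, hgne, hgH⟩ := hg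
  have hX : Nonempty X := by
    by_contra h
    exact hfne (by ext x; exact absurd ⟨x⟩ h)
  obtain ⟨xfM, -, hxfM'⟩ := isCompact_univ.exists_isMaxOn Set.univ_nonempty f.continuous.continuousOn
  obtain ⟨xfm, -, hxfm'⟩ := isCompact_univ.exists_isMinOn Set.univ_nonempty f.continuous.continuousOn
  obtain ⟨xgM, -, hxgM'⟩ := isCompact_univ.exists_isMaxOn Set.univ_nonempty g.continuous.continuousOn
  obtain ⟨xgm, -, hxgm'⟩ := isCompact_univ.exists_isMinOn Set.univ_nonempty g.continuous.continuousOn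
  have hxfM : ∀ y, f y ≤ f xfM := fun y => hxfM' (Set.mem_univ y)
  have hxfm : ∀ y, f xfm ≤ f y := fun y => hxfm' (Set.mem_univ y)
  have hxgM : ∀ y, g y ≤ g xgM := fun y => hxgM' (Set.mem_univ y)
  have hxgm : ∀ y, g xgm ≤ g y := fun y => hxgm' (Set.mem_univ y)
  -- positivity of the min values
  have hmf : 0 < f xfm := by
    by_contra hc
    push_neg at hc
    have h0 : f xfm = 0 := le_antisymm hc (hf0 _)
    apply hfne
    ext x
    have h1 := hfR x xfm
    rw [h0, mul_zero] at h1
    simpa using le_antisymm h1 (hf0 x)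
  have hmg : 0 < g xgm := by
    by_contra hc
    push_neg at hc
    have h0 : g xgm = 0 := le_antisymm hc (hg0 _)
    apply hgne
    ext x
    have h1 := hgR x xgm
    rw [h0, mul_zero] at h1
    simpa using le_antisymm h1 (hg0 x)
  have hMf : 0 < f xfM := hmf.trans_le (hxfm xfM)
  have hMg : 0 < g xgM := hmg.trans_le (hxgm xgM)
  have hgpos : ∀ x, 0 < g x := fun x => hmg.trans_le (hxgm x)
  have hfpos : ∀ x, 0 < f x := fun x => hmf.trans_le (hxfm x)
  set c : ℝ := (Q - S) / (Q + S) with hc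
  have hcpos : 0 < c := div_pos (by linarith) (by linarith)
  have hclt1 : c < 1 := by
    rw [hc, div_lt_one (by linarith)]; linarith
  set t₀ : ℝ := c * g xgm / f xfM with ht₀
  set t₁ : ℝ := g xgM / (c * f xfm) with ht₁
  have ht₀pos : 0 < t₀ := div_pos (mul_pos hcpos hmg) hMf
  have ht₁pos : 0 < t₁ := div_pos hMg (mul_pos hcpos hmf)
  have c4 : ∀ y, t₀ * f y ≤ c * g y := by
    intro y
    rw [ht₀, div_mul_eq_mul_div, div_le_iff₀ hMf]
    have h1 := hxfM y
    have h2 := hxgm y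
    nlinarith [hg0 y, hf0 y, mul_le_mul_of_nonneg_left h1 (mul_nonneg hcpos.le (hg0 xgm)),
      mul_le_mul_of_nonneg_right h2 (mul_nonneg hcpos.le (hf0 xfM))]
  have c4' : ∀ y, g y ≤ c * (t₁ * f y) := by
    intro y
    have hrw : c * (t₁ * f y) = g xgM * f y / f xfm := by
      rw [ht₁]
      field_simp
    rw [hrw, le_div_iff₀ hmf]
    have h1 := hxfm y
    have h2 := hxgM y
    nlinarith [hg0 y, hf0 y, mul_le_mul_of_nonneg_left h1 (hg0 xgM),
      mul_le_mul_of_nonneg_right h2 (hf0 y)]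
  -- membership of g - t₀ • f in the cone Λ(Q)
  have memA : g - t₀ • f ∈ logHolderCone X Q δ β := by
    refine ⟨?_, ?_, ?_⟩
    · intro x
      simp only [ContinuousMap.sub_apply, ContinuousMap.smul_apply, smul_eq_mul]
      nlinarith [c4 x, hgpos x]
    · intro h0
      have hx0 : (g - t₀ • f) (Classical.arbitrary X) = 0 := by rw [h0]; rfl
      simp only [ContinuousMap.sub_apply, ContinuousMap.smul_apply, smul_eq_mul] at hx0
      nlinarith [c4 (Classical.arbitrary X), hgpos (Classical.arbitrary X)]
    · intro x y hd
      simp only [ContinuousMap.sub_apply, ContinuousMap.smul_apply, smul_eq_mul]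
      set u : ℝ := dist x y ^ β with huu
      have hu : 0 ≤ u := Real.rpow_nonneg dist_nonneg β
      have hg2 := hgH x y hd
      have hf2 : f y ≤ Real.exp (S * u) * f x := by
        have h := hfH y x (by rwa [dist_comm])
        rwa [dist_comm y x] at h
      have hE1 : Real.exp (S * u) ≤ Real.exp (Q * u) :=
        Real.exp_le_exp.2 (by nlinarith)
      have hE2 : Real.exp (-(S * u)) ≤ Real.exp (Q * u) :=
        Real.exp_le_exp.2 (by nlinarith)
      have hfx : Real.exp (-(S * u)) * f y ≤ f x := by
        rw [Real.exp_neg, inv_mul_le_iff₀ (Real.exp_pos _)]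
        exact hf2
      have hkey := key_ineq Q S u hS hQS hu
      have h5 : (Real.exp (Q * u) - Real.exp (-(S * u))) * (t₀ * f y) ≤
          (Real.exp (Q * u) - Real.exp (S * u)) * g y := by
        calc (Real.exp (Q * u) - Real.exp (-(S * u))) * (t₀ * f y)
            ≤ (Real.exp (Q * u) - Real.exp (-(S * u))) * (c * g y) :=
              mul_le_mul_of_nonneg_left (c4 y) (by linarith)
          _ = c * (Real.exp (Q * u) - Real.exp (-(S * u))) * g y := by ring
          _ ≤ (Real.exp (Q * u) - Real.exp (S * u)) * g y :=
              mul_le_mul_of_nonneg_right hkey (hg0 y)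
      have step1 : t₀ * (Real.exp (-(S * u)) * f y) ≤ t₀ * f x :=
        mul_le_mul_of_nonneg_left hfx ht₀pos.le
      nlinarith [hg2, h5, step1]
  -- membership of t₁ • f - g in the cone Λ(Q)
  have memB : t₁ • f - g ∈ logHolderCone X Q δ β := by
    refine ⟨?_, ?_, ?_⟩
    · intro x
      simp only [ContinuousMap.sub_apply, ContinuousMap.smul_apply, smul_eq_mul]
      nlinarith [c4' x, mul_pos ht₁pos (hfpos x)]
    · intro h0
      have hx0 : (t₁ • f - g) (Classical.arbitrary X) = 0 := by rw [h0]; rfl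
      simp only [ContinuousMap.sub_apply, ContinuousMap.smul_apply, smul_eq_mul] at hx0
      nlinarith [c4' (Classical.arbitrary X), mul_pos ht₁pos (hfpos (Classical.arbitrary X))]
    · intro x y hd
      simp only [ContinuousMap.sub_apply, ContinuousMap.smul_apply, smul_eq_mul]
      set u : ℝ := dist x y ^ β with huu
      have hu : 0 ≤ u := Real.rpow_nonneg dist_nonneg β
      have hf2 := hfH x y hd
      have hg2 : g y ≤ Real.exp (S * u) * g x := by
        have h := hgH y x (by rwa [dist_comm])
        rwa [dist_comm y x] at h
      have hE1 : Real.exp (S * u) ≤ Real.exp (Q * u) :=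
        Real.exp_le_exp.2 (by nlinarith)
      have hE2 : Real.exp (-(S * u)) ≤ Real.exp (Q * u) :=
        Real.exp_le_exp.2 (by nlinarith)
      have hgx : Real.exp (-(S * u)) * g y ≤ g x := by
        rw [Real.exp_neg, inv_mul_le_iff₀ (Real.exp_pos _)]
        exact hg2
      have hkey := key_ineq Q S u hS hQS hu
      have h5 : (Real.exp (Q * u) - Real.exp (-(S * u))) * g y ≤
          (Real.exp (Q * u) - Real.exp (S * u)) * (t₁ * f y) := by
        calc (Real.exp (Q * u) - Real.exp (-(S * u))) * g y
            ≤ (Real.exp (Q * u) - Real.exp (-(S * u))) * (c * (t₁ * f y)) :=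
              mul_le_mul_of_nonneg_left (c4' y) (by linarith)
          _ = c * (Real.exp (Q * u) - Real.exp (-(S * u))) * (t₁ * f y) := by ring
          _ ≤ (Real.exp (Q * u) - Real.exp (S * u)) * (t₁ * f y) :=
              mul_le_mul_of_nonneg_right hkey (mul_nonneg ht₁pos.le (hf0 y))
      have step1 : t₁ * f x ≤ t₁ * (Real.exp (S * u) * f y) :=
        mul_le_mul_of_nonneg_left hf2 ht₁pos.le
      nlinarith [hgx, h5, step1]
  -- the ENNReal computation
  set K : ℝ := (Q + S) / (Q - S) * R with hK
  have hKpos : 0 < K := mul_pos (div_pos (by linarith) (by linarith)) hR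
  have hratio : t₁ / t₀ ≤ K ^ 2 := by
    have hKc : K = R / c := by
      have h1 : Q - S ≠ 0 := by linarith
      have h2 : Q + S ≠ 0 := by linarith
      rw [hK, hc]
      field_simp
    have ht : t₁ / t₀ = (g xgM * f xfM) / (c ^ 2 * (f xfm * g xgm)) := by
      rw [ht₁, ht₀]
      field_simp
    rw [ht, hKc, div_pow R c 2, div_le_div_iff₀
      (mul_pos (pow_pos hcpos 2) (mul_pos hmf hmg)) (pow_pos hcpos 2)]
    have hMgR := hgR xgM xgm
    have hMfR := hfR xfM xfm
    nlinarith [mul_le_mul hMgR hMfR (hf0 xfM) (mul_nonneg hR.le (hg0 xgm)),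
      pow_pos hcpos 2, mul_pos hmf hmg, sq_nonneg c]
  rw [hilbertTheta]
  have hB : sInf (ENNReal.ofReal ''
      {t : ℝ | 0 < t ∧ (t • f - g ∈ logHolderCone X Q δ β ∨ t • f - g = 0)}) ≤
      ENNReal.ofReal t₁ :=
    sInf_le ⟨t₁, ⟨ht₁pos, Or.inl memB⟩, rfl⟩
  have hA : ENNReal.ofReal t₀ ≤ sSup (ENNReal.ofReal ''
      {t : ℝ | 0 < t ∧ (g - t • f ∈ logHolderCone X Q δ β ∨ g - t • f = 0)}) :=
    le_sSup ⟨t₀, ⟨ht₀pos, Or.inl memA⟩, rfl⟩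
  have hdiv := ENNReal.div_le_div hB hA
  rw [← ENNReal.ofReal_div_of_pos ht₀pos] at hdiv
  have hfinal := elog_le_log (hdiv.trans (ENNReal.ofReal_le_ofReal hratio))
  refine hfinal.trans ?_
  have : Real.log (K ^ 2) = 2 * Real.log K := by
    rw [Real.log_pow]; push_cast; ring
  rw [this]
end
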